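/- Let λ : TG → GT be an entwining from a monad T = (T, m, e) to a comonad G = (G, δ, ε) on a category A, and let Ĝ be the lifting of G to A_T. Then the assignment K' ↦ U_T(β_{K'}), where β_{K'} : φ_T → Ĝφ_T is the left Ĝ-comodule structure on φ_T corresponding to K', yields a bijection between (i) functors K' : A → (A_T)^{Ĝ} satisfying U^{Ĝ} ∘ K' = φ_T, and (ii) left G-comodule structures β : T → GT on the functor T (i.e., εT ∘ β = id and δT ∘ β = Gβ ∘ β) satisfying β ∘ m = Gm ∘ λT ∘ Tβ. -/

import Mathlib

open CategoryTheory CategoryTheory.Limits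

namespace Paper


variable {A : Type*} [Category A]

/-- An entwining (mixed distributive law) `λ : TG ⟶ GT` from a monad `T` to a comonad `G`. -/
structure Entwining (T : Monad A) (G : Comonad A) where
  lam : (G : A ⥤ A) ⋙ (T : A ⥤ A) ⟶ (T : A ⥤ A) ⋙ (G : A ⥤ A)
  comp_mul : ∀ a : A, T.μ.app ((G : A ⥤ A).obj a) ≫ lam.app a =
      (T : A ⥤ A).map (lam.app a) ≫ lam.app ((T : A ⥤ A).obj a) ≫
        (G : A ⥤ A).map (T.μ.app a)
  comp_unit : ∀ a : A, T.η.app ((G : A ⥤ A).obj a) ≫ lam.app a = (G : A ⥤ A).map (T.η.app a)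
  delta_comp : ∀ a : A, lam.app a ≫ G.δ.app ((T : A ⥤ A).obj a) =
      (T : A ⥤ A).map (G.δ.app a) ≫ lam.app ((G : A ⥤ A).obj a) ≫
        (G : A ⥤ A).map (lam.app a)
  eps_comp : ∀ a : A, lam.app a ≫ G.ε.app ((T : A ⥤ A).obj a) = (T : A ⥤ A).map (G.ε.app a)

namespace Entwining

variable {T : Monad A} {G : Comonad A} (E : Entwining T G)

lemma lam_natural {a b : A} (f : a ⟶ b) :
    (T : A ⥤ A).map ((G : A ⥤ A).map f) ≫ E.lam.app b =
      E.lam.app a ≫ (G : A ⥤ A).map ((T : A ⥤ A).map f) :=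
  E.lam.naturality f

/-- The value of the lifted comonad `Ĝ` on an object of `A_T`:
`Ĝ(a, h) = (G(a), G(h) ∘ λ_a)`. -/
@[simps]
def liftAlgebra (X : T.Algebra) : T.Algebra where
  A := (G : A ⥤ A).obj X.A
  a := E.lam.app X.A ≫ (G : A ⥤ A).map X.a
  unit := by
    rw [← Category.assoc, E.comp_unit, ← Functor.map_comp, X.unit]
    simp
  assoc := by
    calc T.μ.app ((G : A ⥤ A).obj X.A) ≫ E.lam.app X.A ≫ (G : A ⥤ A).map X.a
        = (T.μ.app ((G : A ⥤ A).obj X.A) ≫ E.lam.app X.A) ≫ (G : A ⥤ A).map X.a := by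
          rw [Category.assoc]
      _ = (T : A ⥤ A).map (E.lam.app X.A) ≫ E.lam.app ((T : A ⥤ A).obj X.A) ≫
            (G : A ⥤ A).map (T.μ.app X.A) ≫ (G : A ⥤ A).map X.a := by
          rw [E.comp_mul]; simp [Category.assoc]
      _ = (T : A ⥤ A).map (E.lam.app X.A) ≫ E.lam.app ((T : A ⥤ A).obj X.A) ≫
            (G : A ⥤ A).map ((T : A ⥤ A).map X.a) ≫ (G : A ⥤ A).map X.a := by
          rw [← Functor.map_comp, X.assoc, Functor.map_comp]
      _ = (T : A ⥤ A).map (E.lam.app X.A) ≫ (T : A ⥤ A).map ((G : A ⥤ A).map X.a) ≫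
            E.lam.app X.A ≫ (G : A ⥤ A).map X.a := by
          rw [← Category.assoc (E.lam.app ((T : A ⥤ A).obj X.A)), ← E.lam_natural X.a]
          simp [Category.assoc]
      _ = (T : A ⥤ A).map (E.lam.app X.A ≫ (G : A ⥤ A).map X.a) ≫
            E.lam.app X.A ≫ (G : A ⥤ A).map X.a := by
          rw [Functor.map_comp, Category.assoc]

/-- The lifting `Ĝ` of the comonad `G` to the Eilenberg–Moore category `A_T`
along the entwining `λ`. -/
@[simps]
def liftedComonad : Comonad (T.Algebra) where
  obj X := E.liftAlgebra X
  map {X Y} f :=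
    { f := (G : A ⥤ A).map f.f
      h := by
        calc (T : A ⥤ A).map ((G : A ⥤ A).map f.f) ≫ E.lam.app Y.A ≫ (G : A ⥤ A).map Y.a
            = (E.lam.app X.A ≫ (G : A ⥤ A).map ((T : A ⥤ A).map f.f)) ≫
                (G : A ⥤ A).map Y.a := by
              rw [← Category.assoc, E.lam_natural f.f]
          _ = E.lam.app X.A ≫ (G : A ⥤ A).map ((T : A ⥤ A).map f.f ≫ Y.a) := by
              rw [Category.assoc, ← Functor.map_comp]
          _ = E.lam.app X.A ≫ (G : A ⥤ A).map (X.a ≫ f.f) := by rw [f.h]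
          _ = (E.lam.app X.A ≫ (G : A ⥤ A).map X.a) ≫ (G : A ⥤ A).map f.f := by
              rw [Functor.map_comp, Category.assoc] }
  map_id X := by ext; exact (G : A ⥤ A).map_id X.A
  map_comp f g := by ext; exact (G : A ⥤ A).map_comp f.f g.f
  ε :=
    { app := fun X =>
        { f := G.ε.app X.A
          h := by
            dsimp
            show (T : A ⥤ A).map (G.ε.app X.A) ≫ X.a = (E.lam.app X.A ≫ (G : A ⥤ A).map X.a) ≫ G.ε.app X.A
            have hnat : (G : A ⥤ A).map X.a ≫ G.ε.app X.A =
                G.ε.app ((T : A ⥤ A).obj X.A) ≫ X.a := by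
              simpa using (G.ε.naturality X.a).symm
            rw [Category.assoc, hnat, ← Category.assoc, E.eps_comp] }
      naturality := fun X Y f => by ext; exact G.ε.naturality f.f }
  δ :=
    { app := fun X =>
        { f := G.δ.app X.A
          h := by
            dsimp
            calc (T : A ⥤ A).map (G.δ.app X.A) ≫ E.lam.app ((G : A ⥤ A).obj X.A) ≫
                  (G : A ⥤ A).map (E.lam.app X.A ≫ (G : A ⥤ A).map X.a)
                = (T : A ⥤ A).map (G.δ.app X.A) ≫ E.lam.app ((G : A ⥤ A).obj X.A) ≫
                    (G : A ⥤ A).map (E.lam.app X.A) ≫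
                    (G : A ⥤ A).map ((G : A ⥤ A).map X.a) := by
                  rw [Functor.map_comp]
              _ = (E.lam.app X.A ≫ G.δ.app ((T : A ⥤ A).obj X.A)) ≫
                    (G : A ⥤ A).map ((G : A ⥤ A).map X.a) := by
                  rw [E.delta_comp]; simp [Category.assoc]
              _ = E.lam.app X.A ≫ (G : A ⥤ A).map X.a ≫ G.δ.app X.A := by
                  have hnat : (G : A ⥤ A).map X.a ≫ G.δ.app X.A =
                      G.δ.app ((T : A ⥤ A).obj X.A) ≫
                        (G : A ⥤ A).map ((G : A ⥤ A).map X.a) := by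
                    simpa using (G.δ.naturality X.a).symm
                  rw [hnat, Category.assoc]
              _ = (E.lam.app X.A ≫ (G : A ⥤ A).map X.a) ≫ G.δ.app X.A := by
                  rw [Category.assoc] }
      naturality := fun X Y f => by ext; exact G.δ.naturality f.f }
  coassoc X := by ext; exact G.coassoc X.A
  left_counit X := by ext; exact G.left_counit X.A
  right_counit X := by ext; exact G.right_counit X.A


/-- The value of the lifted monad `T̂` on an object of `A^G`: `T̂(a, θ) = (T(a), λ_a ∘ T(θ))`. -/
@[simps]
def liftCoalgebra (X : G.Coalgebra) : G.Coalgebra where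
  A := (T : A ⥤ A).obj X.A
  a := (T : A ⥤ A).map X.a ≫ E.lam.app X.A
  counit := by
    rw [Category.assoc, E.eps_comp, ← Functor.map_comp, X.counit]
    simp
  coassoc := by
    calc ((T : A ⥤ A).map X.a ≫ E.lam.app X.A) ≫ G.δ.app ((T : A ⥤ A).obj X.A)
        = (T : A ⥤ A).map X.a ≫ (T : A ⥤ A).map (G.δ.app X.A) ≫
            E.lam.app ((G : A ⥤ A).obj X.A) ≫ (G : A ⥤ A).map (E.lam.app X.A) := by
          rw [Category.assoc, E.delta_comp]
      _ = (T : A ⥤ A).map (X.a ≫ G.δ.app X.A) ≫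
            E.lam.app ((G : A ⥤ A).obj X.A) ≫ (G : A ⥤ A).map (E.lam.app X.A) := by
          rw [Functor.map_comp, Category.assoc]
      _ = (T : A ⥤ A).map X.a ≫ (T : A ⥤ A).map ((G : A ⥤ A).map X.a) ≫
            E.lam.app ((G : A ⥤ A).obj X.A) ≫ (G : A ⥤ A).map (E.lam.app X.A) := by
          rw [X.coassoc, Functor.map_comp, Category.assoc]
      _ = (T : A ⥤ A).map X.a ≫ E.lam.app X.A ≫
            (G : A ⥤ A).map ((T : A ⥤ A).map X.a) ≫ (G : A ⥤ A).map (E.lam.app X.A) := by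
          rw [← Category.assoc ((T : A ⥤ A).map ((G : A ⥤ A).map X.a)), E.lam_natural X.a]
          simp only [Category.assoc]
      _ = ((T : A ⥤ A).map X.a ≫ E.lam.app X.A) ≫
            (G : A ⥤ A).map ((T : A ⥤ A).map X.a ≫ E.lam.app X.A) := by
          rw [Functor.map_comp]
          simp only [Category.assoc]


/-- The lifting of the endofunctor `T` to `A^G`. -/
@[simps]
def liftFunctorT : G.Coalgebra ⥤ G.Coalgebra where
  obj X := E.liftCoalgebra X
  map {X Y} f :=
    { f := (T : A ⥤ A).map f.f
      h := by
        calc ((T : A ⥤ A).map X.a ≫ E.lam.app X.A) ≫ (G : A ⥤ A).map ((T : A ⥤ A).map f.f)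
            = (T : A ⥤ A).map X.a ≫ E.lam.app X.A ≫
                (G : A ⥤ A).map ((T : A ⥤ A).map f.f) := by rw [Category.assoc]
          _ = (T : A ⥤ A).map X.a ≫ (T : A ⥤ A).map ((G : A ⥤ A).map f.f) ≫
                E.lam.app Y.A := by rw [← E.lam_natural f.f]
          _ = (T : A ⥤ A).map (X.a ≫ (G : A ⥤ A).map f.f) ≫ E.lam.app Y.A := by
              rw [Functor.map_comp, Category.assoc]
          _ = (T : A ⥤ A).map (f.f ≫ Y.a) ≫ E.lam.app Y.A := by rw [f.h]
          _ = (T : A ⥤ A).map f.f ≫ (T : A ⥤ A).map Y.a ≫ E.lam.app Y.A := by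
              rw [Functor.map_comp, Category.assoc] }
  map_id X := by ext; exact (T : A ⥤ A).map_id X.A
  map_comp f g := by ext; exact (T : A ⥤ A).map_comp f.f g.f

/-- The unit of the lifted monad. -/
@[simps]
def liftEta : 𝟭 (G.Coalgebra) ⟶ E.liftFunctorT where
  app X :=
    { f := T.η.app X.A
      h := by
        dsimp
        show X.a ≫ (G : A ⥤ A).map (T.η.app X.A) = T.η.app X.A ≫ (T : A ⥤ A).map X.a ≫ E.lam.app X.A
        have hnat : X.a ≫ T.η.app ((G : A ⥤ A).obj X.A) =
            T.η.app X.A ≫ (T : A ⥤ A).map X.a := by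
          simpa using T.η.naturality X.a
        rw [← Category.assoc, ← hnat, Category.assoc, E.comp_unit] }
  naturality X Y f := by
    ext
    show f.f ≫ T.η.app Y.A = T.η.app X.A ≫ (T : A ⥤ A).map f.f
    simpa using T.η.naturality f.f

/-- The multiplication of the lifted monad. -/
@[simps]
def liftMu : E.liftFunctorT ⋙ E.liftFunctorT ⟶ E.liftFunctorT where
  app X :=
    { f := T.μ.app X.A
      h := by
        dsimp
        have hnat : (T : A ⥤ A).map ((T : A ⥤ A).map X.a) ≫
              T.μ.app ((G : A ⥤ A).obj X.A) = T.μ.app X.A ≫ (T : A ⥤ A).map X.a := by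
          simpa using T.μ.naturality X.a
        calc ((T : A ⥤ A).map ((T : A ⥤ A).map X.a ≫ E.lam.app X.A) ≫
                E.lam.app ((T : A ⥤ A).obj X.A)) ≫ (G : A ⥤ A).map (T.μ.app X.A)
            = (T : A ⥤ A).map ((T : A ⥤ A).map X.a) ≫
                ((T : A ⥤ A).map (E.lam.app X.A) ≫ E.lam.app ((T : A ⥤ A).obj X.A) ≫
                  (G : A ⥤ A).map (T.μ.app X.A)) := by
              rw [Functor.map_comp]
              simp only [Category.assoc]
          _ = (T : A ⥤ A).map ((T : A ⥤ A).map X.a) ≫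
                T.μ.app ((G : A ⥤ A).obj X.A) ≫ E.lam.app X.A := by
              rw [← E.comp_mul]
          _ = (T.μ.app X.A ≫ (T : A ⥤ A).map X.a) ≫ E.lam.app X.A := by
              rw [← Category.assoc, hnat]
          _ = T.μ.app X.A ≫ (T : A ⥤ A).map X.a ≫ E.lam.app X.A := by
              rw [Category.assoc] }
  naturality X Y f := by
    ext
    show (T : A ⥤ A).map ((T : A ⥤ A).map f.f) ≫ T.μ.app Y.A =
      T.μ.app X.A ≫ (T : A ⥤ A).map f.f
    simpa using T.μ.naturality f.f

/-- The lifting `T̂` of the monad `T` to the Eilenberg–Moore category `A^G`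
along the entwining `λ`. -/
def liftedMonad : Monad (G.Coalgebra) where
  toFunctor := E.liftFunctorT
  η := E.liftEta
  μ := E.liftMu
  assoc X := by ext; exact T.assoc X.A
  left_unit X := by ext; exact T.left_unit X.A
  right_unit X := by ext; exact T.right_unit X.A


end Entwining


namespace Entwining

variable {A : Type*} [Category A] {F : Monad A} {G : Comonad A} (E : Entwining F G)

/-- The canonical natural transformation assembling the structure morphisms of
coalgebras over a comonad. -/
@[simps]
def coalgStructNat {C : Type*} [Category C] (H : Comonad C) :
    H.forget ⟶ H.forget ⋙ (H : C ⥤ C) where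
  app X := X.a
  naturality X Y f := by exact f.h.symm

/-- The left `Ĝ`-comodule structure `β_{K'} : φ_F ⟶ Ĝφ_F` on the free functor `φ_F`
corresponding to a functor `K' : A ⥤ (A_F)^{Ĝ}` with `U^{Ĝ} ∘ K' = φ_F`. -/
def structOfK (K' : A ⥤ E.liftedComonad.Coalgebra)
    (hK' : K' ⋙ Comonad.forget E.liftedComonad = F.free) :
    F.free ⟶ F.free ⋙ (E.liftedComonad : F.Algebra ⥤ F.Algebra) :=
  eqToHom hK'.symm ≫ Functor.whiskerLeft K' (coalgStructNat E.liftedComonad) ≫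
    Functor.whiskerRight (eqToHom hK') (E.liftedComonad : F.Algebra ⥤ F.Algebra)

/-- The underlying left `G`-comodule structure `β = U_F(β_{K'}) : F ⟶ GF` on the
functor `F` induced by a functor `K'` as above. -/
def inducedComod (K' : A ⥤ E.liftedComonad.Coalgebra)
    (hK' : K' ⋙ Comonad.forget E.liftedComonad = F.free) :
    (F : A ⥤ A) ⟶ (F : A ⥤ A) ⋙ (G : A ⥤ A) :=
  Functor.whiskerRight (E.structOfK K' hK') F.forget

/-- The conditions on `β : F ⟶ GF` appearing in Proposition 2.2: `β` is a left
`G`-comodule structure on `F` and the diagram `β ∘ m = Gm ∘ λF ∘ Fβ` commutes. -/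
def ComodLaws (β : (F : A ⥤ A) ⟶ (F : A ⥤ A) ⋙ (G : A ⥤ A)) : Prop :=
  (∀ a : A, β.app a ≫ G.ε.app ((F : A ⥤ A).obj a) = 𝟙 ((F : A ⥤ A).obj a)) ∧
  (∀ a : A, β.app a ≫ G.δ.app ((F : A ⥤ A).obj a) =
    β.app a ≫ (G : A ⥤ A).map (β.app a)) ∧
  (∀ a : A, F.μ.app a ≫ β.app a =
    (F : A ⥤ A).map (β.app a) ≫ E.lam.app ((F : A ⥤ A).obj a) ≫
      (G : A ⥤ A).map (F.μ.app a))


/-! ### Auxiliary machinery for Proposition 2.2 -/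

/-- Extensionality for coalgebras over a comonad. -/
lemma coalgebra_ext' {C : Type*} [Category C] {H : Comonad C} {X Y : H.Coalgebra}
    (h : X.A = Y.A)
    (w : Y.a = eqToHom h.symm ≫ X.a ≫ eqToHom (congrArg (fun Z => (H : C ⥤ C).obj Z) h)) :
    X = Y := by
  obtain ⟨XA, Xa, _, _⟩ := X
  obtain ⟨YA, Ya, _, _⟩ := Y
  dsimp at h
  subst h
  simp only [eqToHom_refl, Category.comp_id, Category.id_comp] at w
  subst w
  rfl

/-- Transport of the counit axiom of a coalgebra along an equality of carriers. -/
lemma coalg_counit_transport {C : Type*} [Category C] {H : Comonad C} (X : H.Coalgebra)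
    {Y : C} (h : X.A = Y) :
    (eqToHom h.symm ≫ X.a ≫ eqToHom (congrArg (fun Z => (H : C ⥤ C).obj Z) h)) ≫
        H.ε.app Y = 𝟙 Y := by
  subst h
  simpa using X.counit

/-- Transport of the coassociativity axiom of a coalgebra along an equality of carriers. -/
lemma coalg_coassoc_transport {C : Type*} [Category C] {H : Comonad C} (X : H.Coalgebra)
    {Y : C} (h : X.A = Y) :
    (eqToHom h.symm ≫ X.a ≫ eqToHom (congrArg (fun Z => (H : C ⥤ C).obj Z) h)) ≫
        H.δ.app Y =
      (eqToHom h.symm ≫ X.a ≫ eqToHom (congrArg (fun Z => (H : C ⥤ C).obj Z) h)) ≫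
        (H : C ⥤ C).map
          (eqToHom h.symm ≫ X.a ≫ eqToHom (congrArg (fun Z => (H : C ⥤ C).obj Z) h)) := by
  subst h
  simpa using X.coassoc

lemma coalg_hom_transport {C : Type*} [Category C] {H : Comonad C} {X Y : H.Coalgebra}
    (φ : X ⟶ Y) {P Q : C} (hX : X.A = P) (hY : Y.A = Q) :
    (eqToHom hX.symm ≫ φ.f ≫ eqToHom hY) ≫
        (eqToHom hY.symm ≫ Y.a ≫ eqToHom (congrArg (fun Z => (H : C ⥤ C).obj Z) hY)) =
      (eqToHom hX.symm ≫ X.a ≫ eqToHom (congrArg (fun Z => (H : C ⥤ C).obj Z) hX)) ≫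
        (H : C ⥤ C).map (eqToHom hX.symm ≫ φ.f ≫ eqToHom hY) := by
  subst hX hY
  simp only [eqToHom_refl, Category.id_comp, Category.comp_id]
  exact φ.h.symm

/-- The coalgebra structure map of `K'.obj a`, transported to the free algebra. -/
def gammaK (K' : A ⥤ E.liftedComonad.Coalgebra)
    (hK' : K' ⋙ Comonad.forget E.liftedComonad = F.free) (a : A) :
    F.free.obj a ⟶ (E.liftedComonad : F.Algebra ⥤ F.Algebra).obj (F.free.obj a) :=
  eqToHom (Functor.congr_obj hK' a).symm ≫ (K'.obj a).a ≫
    eqToHom (congrArg (fun Z => (E.liftedComonad : F.Algebra ⥤ F.Algebra).obj Z)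
      (Functor.congr_obj hK' a))

lemma gammaK_counit (K' : A ⥤ E.liftedComonad.Coalgebra)
    (hK' : K' ⋙ Comonad.forget E.liftedComonad = F.free) (a : A) :
    E.gammaK K' hK' a ≫ E.liftedComonad.ε.app (F.free.obj a) = 𝟙 (F.free.obj a) :=
  coalg_counit_transport (K'.obj a) (Functor.congr_obj hK' a)

lemma gammaK_coassoc (K' : A ⥤ E.liftedComonad.Coalgebra)
    (hK' : K' ⋙ Comonad.forget E.liftedComonad = F.free) (a : A) :
    E.gammaK K' hK' a ≫ E.liftedComonad.δ.app (F.free.obj a) =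
      E.gammaK K' hK' a ≫
        (E.liftedComonad : F.Algebra ⥤ F.Algebra).map (E.gammaK K' hK' a) :=
  coalg_coassoc_transport (K'.obj a) (Functor.congr_obj hK' a)

lemma gammaK_natural (K' : A ⥤ E.liftedComonad.Coalgebra)
    (hK' : K' ⋙ Comonad.forget E.liftedComonad = F.free) {a b : A} (f : a ⟶ b) :
    F.free.map f ≫ E.gammaK K' hK' b =
      E.gammaK K' hK' a ≫
        (E.liftedComonad : F.Algebra ⥤ F.Algebra).map (F.free.map f) := by
  have hfree : F.free.map f =
      eqToHom (Functor.congr_obj hK' a).symm ≫ (K'.map f).f ≫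
        eqToHom (Functor.congr_obj hK' b) := by
    exact Functor.congr_hom hK'.symm f
  rw [hfree, gammaK, gammaK]
  exact coalg_hom_transport (K'.map f) (Functor.congr_obj hK' a) (Functor.congr_obj hK' b)

lemma structOfK_app (K' : A ⥤ E.liftedComonad.Coalgebra)
    (hK' : K' ⋙ Comonad.forget E.liftedComonad = F.free) (a : A) :
    (E.structOfK K' hK').app a = E.gammaK K' hK' a := by
  simp only [structOfK, gammaK, NatTrans.comp_app, Functor.whiskerLeft_app, Functor.whiskerRight_app,
    coalgStructNat_app, eqToHom_app, eqToHom_map]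
  rfl

lemma inducedComod_app (K' : A ⥤ E.liftedComonad.Coalgebra)
    (hK' : K' ⋙ Comonad.forget E.liftedComonad = F.free) (a : A) :
    (E.inducedComod K' hK').app a = (E.gammaK K' hK' a).f := by
  rw [inducedComod, Functor.whiskerRight_app, structOfK_app]
  rfl

/-- The coalgebra over the lifted comonad determined by a comodule structure `β`. -/
@[simps]
def mkCoalg (β : (F : A ⥤ A) ⟶ (F : A ⥤ A) ⋙ (G : A ⥤ A)) (hβ : E.ComodLaws β) (a : A) :
    E.liftedComonad.Coalgebra where
  A := F.free.obj a
  a :=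
    { f := β.app a
      h := by
        show (F : A ⥤ A).map (β.app a) ≫ E.lam.app ((F : A ⥤ A).obj a) ≫
          (G : A ⥤ A).map (F.μ.app a) = F.μ.app a ≫ β.app a
        rw [← hβ.2.2 a] }
  counit := by
    ext
    exact hβ.1 a
  coassoc := by
    ext
    exact hβ.2.1 a

/-- The functor `A ⥤ (A_F)^{Ĝ}` determined by a comodule structure `β`. -/
@[simps]
def mkK (β : (F : A ⥤ A) ⟶ (F : A ⥤ A) ⋙ (G : A ⥤ A)) (hβ : E.ComodLaws β) :
    A ⥤ E.liftedComonad.Coalgebra where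
  obj a := E.mkCoalg β hβ a
  map {a b} f :=
    { f := F.free.map f
      h := by
        ext
        exact (β.naturality f).symm }
  map_id a := by
    ext
    simp
    rfl
  map_comp f g := by
    ext
    simp
    rfl

lemma mkK_forget (β : (F : A ⥤ A) ⟶ (F : A ⥤ A) ⋙ (G : A ⥤ A)) (hβ : E.ComodLaws β) :
    E.mkK β hβ ⋙ Comonad.forget E.liftedComonad = F.free :=
  rfl

lemma inducedComod_mkK (β : (F : A ⥤ A) ⟶ (F : A ⥤ A) ⋙ (G : A ⥤ A)) (hβ : E.ComodLaws β)
    (h : E.mkK β hβ ⋙ Comonad.forget E.liftedComonad = F.free) :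
    E.inducedComod (E.mkK β hβ) h = β := by
  ext a
  rw [inducedComod_app, gammaK]
  erw [eqToHom_refl, eqToHom_refl]
  erw [Category.id_comp, Category.comp_id]
  rfl

lemma coalg_eqToHom_f {C : Type*} [Category C] {H : Comonad C} {X Y : H.Coalgebra}
    (h : X = Y) : (eqToHom h).f = eqToHom (congrArg Comonad.Coalgebra.A h) := by
  subst h
  rfl

lemma inducedComod_laws (K' : A ⥤ E.liftedComonad.Coalgebra)
    (hK' : K' ⋙ Comonad.forget E.liftedComonad = F.free) :
    E.ComodLaws (E.inducedComod K' hK') := by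
  refine ⟨fun a => ?_, fun a => ?_, fun a => ?_⟩
  · have h := congrArg Monad.Algebra.Hom.f (E.gammaK_counit K' hK' a)
    simp only [Monad.Algebra.comp_f, Monad.Algebra.id_f] at h
    rw [E.inducedComod_app]
    exact h
  · have h := congrArg Monad.Algebra.Hom.f (E.gammaK_coassoc K' hK' a)
    simp only [Monad.Algebra.comp_f] at h
    rw [E.inducedComod_app]
    exact h
  · have h := (E.gammaK K' hK' a).h
    rw [E.inducedComod_app]
    dsimp at h ⊢
    exact h.symm

lemma mkK_roundtrip (K' : A ⥤ E.liftedComonad.Coalgebra)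
    (hK' : K' ⋙ Comonad.forget E.liftedComonad = F.free)
    (hβ : E.ComodLaws (E.inducedComod K' hK')) :
    K' = E.mkK (E.inducedComod K' hK') hβ := by
  refine CategoryTheory.Functor.ext (fun a => ?_) (fun a b f => ?_)
  · refine coalgebra_ext' (X := K'.obj a) (Y := E.mkK (E.inducedComod K' hK') hβ |>.obj a)
      (Functor.congr_obj hK' a) ?_
    show (E.mkCoalg (E.inducedComod K' hK') hβ a).a = E.gammaK K' hK' a
    ext
    exact E.inducedComod_app K' hK' a
  · apply Comonad.Coalgebra.Hom.ext
    rw [Comonad.Coalgebra.comp_f, Comonad.Coalgebra.comp_f, coalg_eqToHom_f, coalg_eqToHom_f]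
    show (K' ⋙ Comonad.forget E.liftedComonad).map f = _
    rw [Functor.congr_hom hK' f]
    rfl

end Entwining

open Entwining in
/-- **Proposition 2.2.**  Let `λ : FG ⟶ GF` be an entwining from a monad `F` to a
comonad `G` on `A` and `Ĝ` the lifting of `G` to `A_F`.  The assignment
`K' ↦ U_F(β_{K'})` yields a bijection between functors `K' : A ⥤ (A_F)^{Ĝ}` with
`U^{Ĝ} ∘ K' = φ_F` and left `G`-comodule structures `β : F ⟶ GF` on the functor `F`
satisfying `β ∘ m = Gm ∘ λF ∘ Fβ`. -/
theorem statement7 {A : Type*} [Category A] (F : Monad A) (G : Comonad A)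
    (E : Entwining F G) :
    (∀ K : {K' : A ⥤ E.liftedComonad.Coalgebra //
        K' ⋙ Comonad.forget E.liftedComonad = F.free},
      E.ComodLaws (E.inducedComod K.1 K.2)) ∧
    Function.Injective
      (fun K : {K' : A ⥤ E.liftedComonad.Coalgebra //
          K' ⋙ Comonad.forget E.liftedComonad = F.free} =>
        E.inducedComod K.1 K.2) ∧
    (∀ β : (F : A ⥤ A) ⟶ (F : A ⥤ A) ⋙ (G : A ⥤ A), E.ComodLaws β →
      ∃ K : {K' : A ⥤ E.liftedComonad.Coalgebra //
          K' ⋙ Comonad.forget E.liftedComonad = F.free},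
        E.inducedComod K.1 K.2 = β) := by
  refine ⟨fun K => E.inducedComod_laws K.1 K.2, ?_, ?_⟩
  · intro K₁ K₂ h
    apply Subtype.ext
    rw [E.mkK_roundtrip K₁.1 K₁.2 (E.inducedComod_laws K₁.1 K₁.2),
      E.mkK_roundtrip K₂.1 K₂.2 (E.inducedComod_laws K₂.1 K₂.2)]
    congr 1
  · intro β hβ
    exact ⟨⟨E.mkK β hβ, E.mkK_forget β hβ⟩, E.inducedComod_mkK β hβ _⟩

end Paper
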